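/- arXiv:0804.3209 — 4 statements merged into one kernel-verified Lean document; each statement's English description precedes it below -/
import Mathlib

section
/- Let ρ : L∞ → ℝ be given by ρ(X) = sup_{f ∈ H} E[−fX] for a nonempty set H ⊆ L¹₊ of densities with E[f] = 1. If H is uniformly integrable, then ρ has the Lebesgue property: for every uniformly (a.s.) bounded sequence Xₙ converging in probability to X, ρ(Xₙ) → ρ(X). -/
open MeasureTheory Filter

/-- If `H` is a uniformly integrable set of densities, then the coherent risk
measure `ρ(X) = sup_{f ∈ H} E[−fX]` has the Lebesgue property: `ρ(Xₙ) → ρ(X)`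
for every uniformly bounded sequence `Xₙ` converging in probability to `X`. -/
theorem lebesgue_of_uniformly_integrable {Ω : Type*} [MeasurableSpace Ω]
    {μ : Measure Ω} [IsProbabilityMeasure μ]
    (H : Set (Lp ℝ 1 μ)) (hHne : H.Nonempty)
    (hdens : ∀ f ∈ H, 0 ≤ f ∧ ∫ ω, (f : Ω → ℝ) ω ∂μ = 1)
    (hUI : ∀ ε > (0 : ℝ), ∃ K > (0 : ℝ), ∀ f ∈ H,
      ∫ ω in {ω | K < (f : Ω → ℝ) ω}, (f : Ω → ℝ) ω ∂μ < ε)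
    (ρ : Lp ℝ ⊤ μ → ℝ)
    (hρ : ∀ X : Lp ℝ ⊤ μ,
      ρ X = ⨆ f : H, ∫ ω, -((f.1 : Ω → ℝ) ω * (X : Ω → ℝ) ω) ∂μ) :
    ∀ (Xn : ℕ → Lp ℝ ⊤ μ) (X : Lp ℝ ⊤ μ), (∃ C : ℝ, ∀ n, ‖Xn n‖ ≤ C) →
      TendstoInMeasure μ (fun n => ((Xn n : Ω → ℝ))) atTop (X : Ω → ℝ) →
      Tendsto (fun n => ρ (Xn n)) atTop (nhds (ρ X)) := by
  intro Xn X hCex hconv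
  obtain ⟨C, hC⟩ := hCex
  haveI : Nonempty H := hHne.to_subtype
  -- every L∞ function is a.e. bounded by its norm
  have aux_ae : ∀ Y : Lp ℝ ⊤ μ, ∀ᵐ ω ∂μ, ‖(Y : Ω → ℝ) ω‖ ≤ ‖Y‖ := by
    intro Y
    filter_upwards [ae_le_eLpNormEssSup (f := (Y : Ω → ℝ)) (μ := μ)] with ω hω
    rw [Lp.norm_def, eLpNorm_exponent_top]
    have h2 : eLpNormEssSup (Y : Ω → ℝ) μ ≠ ⊤ := by
      rw [← eLpNorm_exponent_top]; exact Lp.eLpNorm_ne_top Y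
    calc ‖(Y : Ω → ℝ) ω‖ = ((‖(Y : Ω → ℝ) ω‖₊ : ENNReal)).toReal := by simp
      _ ≤ _ := ENNReal.toReal_mono h2 hω
  have hC0 : 0 ≤ C := le_trans (norm_nonneg _) (hC 0)
  set D : ℝ := C + ‖X‖ + 1 with hD
  have hD0 : 0 < D := by positivity
  -- a.e. bound on differences
  have hdiff : ∀ n, ∀ᵐ ω ∂μ, |(Xn n : Ω → ℝ) ω - (X : Ω → ℝ) ω| ≤ D := by
    intro n
    filter_upwards [aux_ae (Xn n), aux_ae X] with ω h1 h2
    have h3 := norm_sub_le ((Xn n : Ω → ℝ) ω) ((X : Ω → ℝ) ω)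
    rw [Real.norm_eq_abs] at h3
    have := hC n
    simp only [hD]
    linarith
  -- all L∞ functions are integrable
  have hXint : ∀ Y : Lp ℝ ⊤ μ, Integrable (Y : Ω → ℝ) μ := fun Y =>
    (Lp.memLp Y).integrable le_top
  -- uniform integrability of the sequence
  have hui : UnifIntegrable (fun n => ((Xn n : Ω → ℝ))) 1 μ := by
    intro ε hε
    refine ⟨ε / (C + 1), by positivity, fun n s hs hμs => ?_⟩
    calc eLpNorm (s.indicator ((Xn n : Ω → ℝ))) 1 μ
        ≤ eLpNorm (s.indicator (fun _ => C)) 1 μ := by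
          refine eLpNorm_mono_ae ?_
          filter_upwards [aux_ae (Xn n)] with ω hω
          by_cases hωs : ω ∈ s
          · simp only [Set.indicator_of_mem hωs]
            exact le_trans (hω.trans (hC n)) (le_abs_self C)
          · simp [Set.indicator_of_notMem hωs]
      _ ≤ ‖C‖₊ * μ s ^ (1 / (1 : ENNReal).toReal) := eLpNorm_indicator_const_le _ _
      _ ≤ ENNReal.ofReal ε := by
          simp only [ENNReal.toReal_one, div_one, ENNReal.rpow_one]
          calc (‖C‖₊ : ENNReal) * μ s ≤ ENNReal.ofReal C * ENNReal.ofReal (ε / (C + 1)) := by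
                refine mul_le_mul' ?_ hμs
                rw [← enorm_eq_nnnorm, Real.enorm_eq_ofReal hC0]
            _ = ENNReal.ofReal (C * (ε / (C + 1))) := (ENNReal.ofReal_mul hC0).symm
            _ ≤ ENNReal.ofReal ε := by
                refine ENNReal.ofReal_le_ofReal ?_
                rw [mul_div_assoc'] -- C * ε / (C+1)
                rw [div_le_iff₀ (by positivity)]
                nlinarith
  -- L¹ convergence via Vitali
  have hL1 : Tendsto (fun n => eLpNorm ((Xn n : Ω → ℝ) - (X : Ω → ℝ)) 1 μ) atTop (nhds 0) :=
    tendsto_Lp_finite_of_tendstoInMeasure le_rfl ENNReal.one_ne_top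
      (fun n => (Lp.stronglyMeasurable (Xn n)).aestronglyMeasurable)
      (memLp_one_iff_integrable.mpr (hXint X)) hui hconv
  have hL1' : Tendsto (fun n => (eLpNorm ((Xn n : Ω → ℝ) - (X : Ω → ℝ)) 1 μ).toReal)
      atTop (nhds 0) := by
    have := (ENNReal.tendsto_toReal (a := 0) (by simp)).comp hL1
    simpa [Function.comp_def] using this
  have hen_eq : ∀ n, ∫ ω, |(Xn n : Ω → ℝ) ω - (X : Ω → ℝ) ω| ∂μ
      = (eLpNorm ((Xn n : Ω → ℝ) - (X : Ω → ℝ)) 1 μ).toReal := by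
    intro n
    rw [eLpNorm_one_eq_lintegral_enorm,
      ← integral_norm_eq_lintegral_enorm ((hXint (Xn n)).sub (hXint X)).aestronglyMeasurable]
    simp [Real.norm_eq_abs]
  -- basic integrability facts per density
  have hgint : ∀ f : Lp ℝ 1 μ, Integrable (f : Ω → ℝ) μ := fun f => L1.integrable_coeFn f
  have hmulint : ∀ (f : Lp ℝ 1 μ) (Y : Lp ℝ ⊤ μ),
      Integrable (fun ω => (f : Ω → ℝ) ω * (Y : Ω → ℝ) ω) μ := fun f Y =>
    ((hgint f).bdd_mul (Lp.aestronglyMeasurable Y) (aux_ae Y)).congr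
      (Eventually.of_forall fun ω => mul_comm _ _)
  -- each integral is bounded by ‖Y‖
  have hIle : ∀ f ∈ H, ∀ Y : Lp ℝ ⊤ μ,
      ∫ ω, -((f : Ω → ℝ) ω * (Y : Ω → ℝ) ω) ∂μ ≤ ‖Y‖ := by
    intro f hf Y
    have hg0 : 0 ≤ᵐ[μ] (f : Ω → ℝ) := (Lp.coeFn_nonneg f).mpr (hdens f hf).1
    have h1 : ∫ ω, -((f : Ω → ℝ) ω * (Y : Ω → ℝ) ω) ∂μ
        ≤ ∫ ω, (f : Ω → ℝ) ω * ‖Y‖ ∂μ := by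
      refine integral_mono_ae (hmulint f Y).neg ((hgint f).mul_const _) ?_
      filter_upwards [hg0, aux_ae Y] with ω h0 hb
      simp only [Pi.zero_apply] at h0
      have hY : |(Y : Ω → ℝ) ω| ≤ ‖Y‖ := by rwa [← Real.norm_eq_abs]
      calc -((f : Ω → ℝ) ω * (Y : Ω → ℝ) ω) = (f : Ω → ℝ) ω * (-(Y : Ω → ℝ) ω) := by ring
        _ ≤ (f : Ω → ℝ) ω * ‖Y‖ :=
          mul_le_mul_of_nonneg_left (le_trans (neg_le_abs _) hY) h0
    calc ∫ ω, -((f : Ω → ℝ) ω * (Y : Ω → ℝ) ω) ∂μ ≤ ∫ ω, (f : Ω → ℝ) ω * ‖Y‖ ∂μ := h1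
      _ = (∫ ω, (f : Ω → ℝ) ω ∂μ) * ‖Y‖ := integral_mul_const _ _
      _ = ‖Y‖ := by rw [(hdens f hf).2, one_mul]
  have hbdd : ∀ Y : Lp ℝ ⊤ μ,
      BddAbove (Set.range fun f : H => ∫ ω, -((f.1 : Ω → ℝ) ω * (Y : Ω → ℝ) ω) ∂μ) := by
    intro Y
    refine ⟨‖Y‖, ?_⟩
    rintro x ⟨⟨f, hf⟩, rfl⟩
    exact hIle f hf Y
  -- main estimate
  rw [Metric.tendsto_atTop]
  intro δ hδ
  obtain ⟨K, hK0, hKH⟩ := hUI (δ / (2 * D)) (by positivity)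
  have hev : ∀ᶠ n in atTop,
      (eLpNorm ((Xn n : Ω → ℝ) - (X : Ω → ℝ)) 1 μ).toReal < δ / (2 * K) :=
    hL1'.eventually (Iio_mem_nhds (by positivity))
  rw [eventually_atTop] at hev
  obtain ⟨N, hN⟩ := hev
  refine ⟨N, fun n hn => ?_⟩
  have hen := hN n hn
  set en := (eLpNorm ((Xn n : Ω → ℝ) - (X : Ω → ℝ)) 1 μ).toReal with hen_def
  have hen0 : 0 ≤ en := ENNReal.toReal_nonneg
  -- per-density estimate
  have key : ∀ f : H,
      |(∫ ω, -((f.1 : Ω → ℝ) ω * (Xn n : Ω → ℝ) ω) ∂μ) -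
        (∫ ω, -((f.1 : Ω → ℝ) ω * (X : Ω → ℝ) ω) ∂μ)| ≤ K * en + δ / 2 := by
    rintro ⟨f, hf⟩
    have hg0 : 0 ≤ᵐ[μ] (f : Ω → ℝ) := (Lp.coeFn_nonneg f).mpr (hdens f hf).1
    have hgm : Measurable (f : Ω → ℝ) := (Lp.stronglyMeasurable f).measurable
    have hsmeas : MeasurableSet {ω | K < (f : Ω → ℝ) ω} := measurableSet_lt measurable_const hgm
    have h1 : (∫ ω, -((f : Ω → ℝ) ω * (Xn n : Ω → ℝ) ω) ∂μ) -
        (∫ ω, -((f : Ω → ℝ) ω * (X : Ω → ℝ) ω) ∂μ)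
        = ∫ ω, (f : Ω → ℝ) ω * ((X : Ω → ℝ) ω - (Xn n : Ω → ℝ) ω) ∂μ := by
      rw [integral_neg, integral_neg, neg_sub_neg,
        ← integral_sub (hmulint f X) (hmulint f (Xn n))]
      exact integral_congr_ae (Eventually.of_forall fun ω => (mul_sub _ _ _).symm)
    have hLint : Integrable (fun ω => (f : Ω → ℝ) ω * |(Xn n : Ω → ℝ) ω - (X : Ω → ℝ) ω|) μ := by
      refine ((hgint f).bdd_mul
        (((hXint (Xn n)).sub (hXint X)).abs.aestronglyMeasurable) (c := D) ?_).congr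
        (Eventually.of_forall fun ω => mul_comm _ _)
      filter_upwards [hdiff n] with ω h
      simpa [Real.norm_eq_abs, abs_abs] using h
    have h2 : |∫ ω, (f : Ω → ℝ) ω * ((X : Ω → ℝ) ω - (Xn n : Ω → ℝ) ω) ∂μ|
        ≤ ∫ ω, (f : Ω → ℝ) ω * |(Xn n : Ω → ℝ) ω - (X : Ω → ℝ) ω| ∂μ := by
      have := norm_integral_le_integral_norm
        (fun ω => (f : Ω → ℝ) ω * ((X : Ω → ℝ) ω - (Xn n : Ω → ℝ) ω)) (μ := μ)
      rw [Real.norm_eq_abs] at this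
      refine this.trans_eq (integral_congr_ae ?_)
      filter_upwards [hg0] with ω h0
      rw [Real.norm_eq_abs, abs_mul, abs_of_nonneg h0, abs_sub_comm]
    have hint1 : Integrable (fun ω => K * |(Xn n : Ω → ℝ) ω - (X : Ω → ℝ) ω|) μ :=
      (((hXint (Xn n)).sub (hXint X)).abs).const_mul K
    have hint2 : Integrable
        (fun ω => D * Set.indicator {ω | K < (f : Ω → ℝ) ω} (f : Ω → ℝ) ω) μ :=
      ((hgint f).indicator hsmeas).const_mul D
    have hptw : ∀ᵐ ω ∂μ, (f : Ω → ℝ) ω * |(Xn n : Ω → ℝ) ω - (X : Ω → ℝ) ω|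
        ≤ K * |(Xn n : Ω → ℝ) ω - (X : Ω → ℝ) ω|
          + D * Set.indicator {ω | K < (f : Ω → ℝ) ω} (f : Ω → ℝ) ω := by
      filter_upwards [hg0, hdiff n] with ω h0 hd
      simp only [Pi.zero_apply] at h0
      simp only [Set.indicator_apply, Set.mem_setOf_eq]
      by_cases hK : K < (f : Ω → ℝ) ω
      · rw [if_pos hK]
        nlinarith [abs_nonneg ((Xn n : Ω → ℝ) ω - (X : Ω → ℝ) ω)]
      · rw [if_neg hK]
        push_neg at hK
        nlinarith [abs_nonneg ((Xn n : Ω → ℝ) ω - (X : Ω → ℝ) ω)]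
    have h3 : ∫ ω, (f : Ω → ℝ) ω * |(Xn n : Ω → ℝ) ω - (X : Ω → ℝ) ω| ∂μ ≤ K * en + δ / 2 := by
      have hKint : ∫ ω in {ω | K < (f : Ω → ℝ) ω}, (f : Ω → ℝ) ω ∂μ ≤ δ / (2 * D) :=
        (hKH f hf).le
      calc ∫ ω, (f : Ω → ℝ) ω * |(Xn n : Ω → ℝ) ω - (X : Ω → ℝ) ω| ∂μ
          ≤ ∫ ω, (K * |(Xn n : Ω → ℝ) ω - (X : Ω → ℝ) ω|
              + D * Set.indicator {ω | K < (f : Ω → ℝ) ω} (f : Ω → ℝ) ω) ∂μ :=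
            integral_mono_ae hLint (hint1.add hint2) hptw
        _ = K * (∫ ω, |(Xn n : Ω → ℝ) ω - (X : Ω → ℝ) ω| ∂μ)
            + D * ∫ ω, Set.indicator {ω | K < (f : Ω → ℝ) ω} (f : Ω → ℝ) ω ∂μ := by
            rw [integral_add hint1 hint2, integral_const_mul, integral_const_mul]
        _ = K * en + D * ∫ ω in {ω | K < (f : Ω → ℝ) ω}, (f : Ω → ℝ) ω ∂μ := by
            rw [hen_eq n, integral_indicator hsmeas]
        _ ≤ K * en + D * (δ / (2 * D)) := by
            exact add_le_add_right (mul_le_mul_of_nonneg_left hKint hD0.le) _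
        _ = K * en + δ / 2 := by field_simp
    calc |(∫ ω, -((f : Ω → ℝ) ω * (Xn n : Ω → ℝ) ω) ∂μ) -
          (∫ ω, -((f : Ω → ℝ) ω * (X : Ω → ℝ) ω) ∂μ)|
        = |∫ ω, (f : Ω → ℝ) ω * ((X : Ω → ℝ) ω - (Xn n : Ω → ℝ) ω) ∂μ| := by rw [h1]
      _ ≤ ∫ ω, (f : Ω → ℝ) ω * |(Xn n : Ω → ℝ) ω - (X : Ω → ℝ) ω| ∂μ := h2
      _ ≤ K * en + δ / 2 := h3
  -- combine via sup
  rw [Real.dist_eq, hρ (Xn n), hρ X]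
  have hsup : |(⨆ f : H, ∫ ω, -((f.1 : Ω → ℝ) ω * (Xn n : Ω → ℝ) ω) ∂μ) -
      (⨆ f : H, ∫ ω, -((f.1 : Ω → ℝ) ω * (X : Ω → ℝ) ω) ∂μ)| ≤ K * en + δ / 2 := by
    rw [abs_sub_le_iff]
    constructor
    · rw [sub_le_iff_le_add]
      refine ciSup_le fun f => ?_
      have h1 := (abs_sub_le_iff.mp (key f)).1
      have h2 := le_ciSup (hbdd X) f
      linarith
    · rw [sub_le_iff_le_add]
      refine ciSup_le fun f => ?_
      have h1 := (abs_sub_le_iff.mp (key f)).2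
      have h2 := le_ciSup (hbdd (Xn n)) f
      linarith
  have : K * en + δ / 2 < δ := by
    have : K * en < K * (δ / (2 * K)) := by
      exact (mul_lt_mul_iff_right₀ hK0).mpr hen
    have heq : K * (δ / (2 * K)) = δ / 2 := by field_simp
    linarith
  exact lt_of_le_of_lt hsup this
end

section
/- Let ρ : L∞ → ℝ be a coherent risk measure given by ρ(X) = sup_{f∈H} E[−fX], let X₁,…,X_N ∈ L∞ with X = X₁+⋯+X_N, and suppose g ∈ H attains ρ(X) = E[−gX]. Define kᵢ = E[−g Xᵢ]. Then k₁+⋯+k_N = ρ(X) and the allocation is fair: for all α₁,…,α_N ∈ [0,1], Σᵢ αᵢ kᵢ ≤ ρ(Σᵢ αᵢ Xᵢ). -/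
open MeasureTheory ENNReal

private lemma lp_coeFn_sum {Ω : Type*} [MeasurableSpace Ω] {μ : Measure Ω}
    {ι : Type*} (s : Finset ι) (F : ι → Lp ℝ ⊤ μ) :
    ((∑ i ∈ s, F i : Lp ℝ ⊤ μ) : Ω → ℝ) =ᵐ[μ] fun ω => ∑ i ∈ s, (F i : Ω → ℝ) ω := by
  classical
  induction s using Finset.induction_on with
  | empty =>
    simp only [Finset.sum_empty]
    filter_upwards [Lp.coeFn_zero (E := ℝ) (p := ⊤) (μ := μ)] with ω hω using hω
  | @insert a s hnotmem ih =>
    rw [Finset.sum_insert hnotmem]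
    filter_upwards [Lp.coeFn_add (F a) (∑ i ∈ s, F i), ih] with ω h1 h2
    rw [Finset.sum_insert hnotmem, h1, Pi.add_apply, h2]

private lemma linfty_ae_bound {Ω : Type*} [MeasurableSpace Ω] {μ : Measure Ω}
    (Y : Lp ℝ ⊤ μ) : ∀ᵐ ω ∂μ, ‖(Y : Ω → ℝ) ω‖ ≤ ‖Y‖ := by
  have hne : eLpNormEssSup (Y : Ω → ℝ) μ ≠ ⊤ := by
    have := Lp.eLpNorm_ne_top Y
    rwa [eLpNorm_exponent_top] at this
  filter_upwards [ae_le_eLpNormEssSup (f := (Y : Ω → ℝ)) (μ := μ)] with ω hω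
  have : ((‖(Y : Ω → ℝ) ω‖₊ : ℝ≥0∞)).toReal ≤ (eLpNormEssSup (Y : Ω → ℝ) μ).toReal :=
    ENNReal.toReal_mono hne hω
  simpa [Lp.norm_def, eLpNorm_exponent_top] using this

/-- Capital allocation: if `g ∈ H` attains `ρ(X) = E[−gX]` for
`X = X₁ + ⋯ + X_N`, then `kᵢ = E[−g Xᵢ]` sums to `ρ(X)` and is a fair
allocation: `Σ αᵢ kᵢ ≤ ρ(Σ αᵢ Xᵢ)` for all `αᵢ ∈ [0,1]`. -/
theorem fair_allocation {Ω : Type*} [MeasurableSpace Ω]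
    {μ : Measure Ω} [IsProbabilityMeasure μ]
    (H : Set (Lp ℝ 1 μ)) (hHne : H.Nonempty)
    (hdens : ∀ f ∈ H, 0 ≤ f ∧ ∫ ω, (f : Ω → ℝ) ω ∂μ = 1)
    (ρ : Lp ℝ ⊤ μ → ℝ)
    (hρ : ∀ X : Lp ℝ ⊤ μ,
      ρ X = ⨆ f : H, ∫ ω, -((f.1 : Ω → ℝ) ω * (X : Ω → ℝ) ω) ∂μ)
    (N : ℕ) (Xs : Fin N → Lp ℝ ⊤ μ) (g : Lp ℝ 1 μ) (hg : g ∈ H)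
    (hattain : ρ (∑ i, Xs i) =
      ∫ ω, -((g : Ω → ℝ) ω * ((∑ i, Xs i : Lp ℝ ⊤ μ) : Ω → ℝ) ω) ∂μ)
    (k : Fin N → ℝ)
    (hk : ∀ i, k i = ∫ ω, -((g : Ω → ℝ) ω * ((Xs i : Ω → ℝ)) ω) ∂μ) :
    (∑ i, k i = ρ (∑ i, Xs i)) ∧
    (∀ α : Fin N → ℝ, (∀ i, 0 ≤ α i ∧ α i ≤ 1) →
      ∑ i, α i * k i ≤ ρ (∑ i, α i • Xs i)) := by
  -- integrability of f * Y for f ∈ L¹, Y ∈ L∞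
  have hint : ∀ (f : Lp ℝ 1 μ) (Y : Lp ℝ ⊤ μ),
      Integrable (fun ω => (f : Ω → ℝ) ω * (Y : Ω → ℝ) ω) μ := by
    intro f Y
    have hf : Integrable (f : Ω → ℝ) μ := L1.integrable_coeFn f
    have := hf.bdd_mul (f := (Y : Ω → ℝ)) (Lp.aestronglyMeasurable Y)
      (linfty_ae_bound Y)
    exact this.congr (by filter_upwards with ω; ring)
  -- bound: E[-f Y] ≤ ‖Y‖ for f ∈ H
  have hbound : ∀ f ∈ H, ∀ Y : Lp ℝ ⊤ μ,
      (∫ ω, -((f : Ω → ℝ) ω * (Y : Ω → ℝ) ω) ∂μ) ≤ ‖Y‖ := by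
    intro f hf Y
    obtain ⟨hf0, hf1⟩ := hdens f hf
    have hf0' : 0 ≤ᵐ[μ] (f : Ω → ℝ) := (Lp.coeFn_nonneg f).mpr hf0
    have hfint : Integrable (f : Ω → ℝ) μ := L1.integrable_coeFn f
    have h1 : (∫ ω, -((f : Ω → ℝ) ω * (Y : Ω → ℝ) ω) ∂μ)
        ≤ ∫ ω, (f : Ω → ℝ) ω * ‖Y‖ ∂μ := by
      refine integral_mono_ae ((hint f Y).neg) (hfint.mul_const _) ?_
      filter_upwards [hf0', linfty_ae_bound Y] with ω h0 hY
      have : -(Y : Ω → ℝ) ω ≤ ‖Y‖ := (neg_le_abs _).trans (by simpa using hY)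
      calc -((f : Ω → ℝ) ω * (Y : Ω → ℝ) ω) = (f : Ω → ℝ) ω * (-(Y : Ω → ℝ) ω) := by ring
        _ ≤ (f : Ω → ℝ) ω * ‖Y‖ := mul_le_mul_of_nonneg_left this h0
    calc (∫ ω, -((f : Ω → ℝ) ω * (Y : Ω → ℝ) ω) ∂μ) ≤ ∫ ω, (f : Ω → ℝ) ω * ‖Y‖ ∂μ := h1
      _ = (∫ ω, (f : Ω → ℝ) ω ∂μ) * ‖Y‖ := by rw [integral_mul_const]
      _ = ‖Y‖ := by rw [hf1, one_mul]
  -- E[-g Y] ≤ ρ Y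
  have hkey : ∀ Y : Lp ℝ ⊤ μ,
      (∫ ω, -((g : Ω → ℝ) ω * (Y : Ω → ℝ) ω) ∂μ) ≤ ρ Y := by
    intro Y
    rw [hρ Y]
    have : Nonempty H := ⟨⟨g, hg⟩⟩
    refine le_ciSup (f := fun f : H => ∫ ω, -((f.1 : Ω → ℝ) ω * (Y : Ω → ℝ) ω) ∂μ)
      ⟨‖Y‖, ?_⟩ ⟨g, hg⟩
    rintro x ⟨⟨f, hf⟩, rfl⟩
    exact hbound f hf Y
  -- linearity
  have hsum : ∀ c : Fin N → ℝ,
      (∫ ω, -((g : Ω → ℝ) ω * ((∑ i, c i • Xs i : Lp ℝ ⊤ μ) : Ω → ℝ) ω) ∂μ)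
        = ∑ i, c i * k i := by
    intro c
    have hae : ((∑ i, c i • Xs i : Lp ℝ ⊤ μ) : Ω → ℝ)
        =ᵐ[μ] fun ω => ∑ i, c i * (Xs i : Ω → ℝ) ω := by
      have h1 := lp_coeFn_sum Finset.univ (fun i => c i • Xs i)
      have h2 : ∀ i : Fin N, ((c i • Xs i : Lp ℝ ⊤ μ) : Ω → ℝ)
          =ᵐ[μ] fun ω => c i * (Xs i : Ω → ℝ) ω := fun i => Lp.coeFn_smul (c i) (Xs i)
      have h3 : ∀ᵐ ω ∂μ, ∀ i : Fin N, ((c i • Xs i : Lp ℝ ⊤ μ) : Ω → ℝ) ω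
          = c i * (Xs i : Ω → ℝ) ω := ae_all_iff.mpr h2
      filter_upwards [h1, h3] with ω hω1 hω3
      rw [hω1]
      exact Finset.sum_congr rfl fun i _ => hω3 i
    calc (∫ ω, -((g : Ω → ℝ) ω * ((∑ i, c i • Xs i : Lp ℝ ⊤ μ) : Ω → ℝ) ω) ∂μ)
        = ∫ ω, ∑ i, c i * (-((g : Ω → ℝ) ω * (Xs i : Ω → ℝ) ω)) ∂μ := by
          refine integral_congr_ae ?_
          filter_upwards [hae] with ω hω
          rw [hω, Finset.mul_sum, ← Finset.sum_neg_distrib]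
          exact Finset.sum_congr rfl fun i _ => by ring
      _ = ∑ i, ∫ ω, c i * (-((g : Ω → ℝ) ω * (Xs i : Ω → ℝ) ω)) ∂μ :=
          integral_finset_sum _ fun i _ => ((hint g (Xs i)).neg.const_mul _)
      _ = ∑ i, c i * k i := by
          refine Finset.sum_congr rfl fun i _ => ?_
          rw [integral_const_mul, hk i]
  constructor
  · have h1 : (∑ i, Xs i : Lp ℝ ⊤ μ) = ∑ i, (1 : ℝ) • Xs i := by simp
    have := hsum (fun _ => 1)
    rw [hattain, h1]
    simpa using this.symm
  · intro α hα
    have := hkey (∑ i, α i • Xs i)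
    rwa [hsum α] at this
end

section
/- Let H ⊆ L¹₊(Ω) be a set of densities (f ≥ 0, E[f] = 1) that is NOT uniformly integrable. Then there exist ε > 0, a uniformly bounded sequence (Xₙ) ⊆ L∞ with 0 ≤ Xₙ ≤ 1 and Xₙ → 0 in probability, such that sup_{f∈H} E[f Xₙ] ≥ ε for all n. Consequently the coherent risk measure ρ(X) = sup_{f∈H} E[−fX] fails the Lebesgue property. -/
open MeasureTheory Filter

/-- If a set `H` of densities is not uniformly integrable, there exist `ε > 0`
and a sequence `Xₙ` with `0 ≤ Xₙ ≤ 1`, converging to `0` in probability, with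
`sup_{f∈H} E[f Xₙ] ≥ ε` for all `n`; consequently the coherent risk measure
`ρ(X) = sup_{f∈H} E[−fX]` fails the Lebesgue property. -/
theorem not_lebesgue_of_not_uniformly_integrable {Ω : Type*} [MeasurableSpace Ω]
    {μ : Measure Ω} [IsProbabilityMeasure μ]
    (H : Set (Lp ℝ 1 μ)) (hHne : H.Nonempty)
    (hdens : ∀ f ∈ H, 0 ≤ f ∧ ∫ ω, (f : Ω → ℝ) ω ∂μ = 1)
    (hnotUI : ∃ ε > (0 : ℝ), ∀ K : ℝ, ∃ f ∈ H,
      ε ≤ ∫ ω in {ω | K < (f : Ω → ℝ) ω}, (f : Ω → ℝ) ω ∂μ)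
    (ρ : Lp ℝ ⊤ μ → ℝ)
    (hρ : ∀ X : Lp ℝ ⊤ μ,
      ρ X = ⨆ f : H, ∫ ω, -((f.1 : Ω → ℝ) ω * (X : Ω → ℝ) ω) ∂μ) :
    (∃ ε > (0 : ℝ), ∃ Xn : ℕ → Lp ℝ ⊤ μ,
      (∀ n, 0 ≤ Xn n ∧ Xn n ≤ Lp.const ⊤ μ (1 : ℝ)) ∧
      TendstoInMeasure μ (fun n => ((Xn n : Ω → ℝ))) atTop (fun _ => 0) ∧
      ∀ n, ε ≤ ⨆ f : H, ∫ ω, (f.1 : Ω → ℝ) ω * (Xn n : Ω → ℝ) ω ∂μ) ∧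
    ¬ (∀ (Xn : ℕ → Lp ℝ ⊤ μ) (X : Lp ℝ ⊤ μ), (∃ C : ℝ, ∀ n, ‖Xn n‖ ≤ C) →
        TendstoInMeasure μ (fun n => ((Xn n : Ω → ℝ))) atTop (X : Ω → ℝ) →
        Tendsto (fun n => ρ (Xn n)) atTop (nhds (ρ X))) := by
  haveI : Nonempty H := hHne.to_subtype
  obtain ⟨ε, hε, hUI⟩ := hnotUI
  choose f hfH hfε using fun n : ℕ => hUI n
  set A : ℕ → Set Ω := fun n => {ω | (n : ℝ) < (f n : Ω → ℝ) ω} with hA_def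
  have hA : ∀ n, MeasurableSet (A n) := fun n =>
    measurableSet_lt measurable_const (Lp.stronglyMeasurable (f n)).measurable
  set Xn : ℕ → Lp ℝ ⊤ μ := fun n =>
    indicatorConstLp ⊤ (hA n) (measure_ne_top μ _) (1 : ℝ) with hXn_def
  have hXcoe : ∀ n, ⇑(Xn n) =ᵐ[μ] (A n).indicator (fun _ => (1 : ℝ)) := fun n =>
    indicatorConstLp_coeFn
  -- 0 ≤ Xn ≤ 1
  have h01 : ∀ n, 0 ≤ Xn n ∧ Xn n ≤ Lp.const ⊤ μ (1 : ℝ) := by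
    intro n
    constructor
    · rw [← Lp.coeFn_nonneg]
      filter_upwards [hXcoe n] with x hx
      rw [hx]
      exact Set.indicator_nonneg (fun _ _ => zero_le_one) x
    · rw [← Lp.coeFn_le]
      filter_upwards [hXcoe n, Lp.coeFn_const (p := (⊤ : ENNReal)) (μ := μ) (c := (1 : ℝ))]
        with x hx hc
      rw [hx, hc]
      classical
      simp only [Set.indicator, Function.const]
      split_ifs <;> norm_num
  -- densities are nonneg and integrable
  have hg_nonneg : ∀ g ∈ H, 0 ≤ᵐ[μ] ⇑g := fun g hg => (Lp.coeFn_nonneg g).mpr (hdens g hg).1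
  have hg_int : ∀ g : Lp ℝ 1 μ, Integrable g μ := fun g => L1.integrable_coeFn g
  -- measure of A n is small
  have hmeas : ∀ n : ℕ, 1 ≤ n → μ (A n) ≤ ENNReal.ofReal (1 / n) := by
    intro n hn
    have markov := mul_meas_ge_le_integral_of_nonneg (hg_nonneg _ (hfH n)) (hg_int (f n)) (n : ℝ)
    rw [(hdens _ (hfH n)).2] at markov
    have hsub : μ (A n) ≤ μ {x | (n : ℝ) ≤ (f n : Ω → ℝ) x} :=
      measure_mono fun x hx => show (n : ℝ) ≤ _ from le_of_lt hx
    have hnpos : (0 : ℝ) < n := by exact_mod_cast hn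
    have h1 : (μ {x | (n : ℝ) ≤ (f n : Ω → ℝ) x}).toReal ≤ 1 / n := by
      rw [le_div_iff₀ hnpos]
      rw [measureReal_def] at markov
      linarith [markov]
    refine hsub.trans ?_
    rw [ENNReal.le_ofReal_iff_toReal_le (measure_ne_top μ _) (by positivity)]
    exact h1
  -- convergence in measure to 0
  have htm : TendstoInMeasure μ (fun n => ((Xn n : Ω → ℝ))) atTop (fun _ => 0) := by
    intro δ hδ
    have hub : ∀ᶠ n in atTop, μ {x | δ ≤ edist ((Xn n : Ω → ℝ) x) ((fun _ => (0:ℝ)) x)}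
        ≤ ENNReal.ofReal (1 / n) := by
      filter_upwards [eventually_ge_atTop 1] with n hn
      refine le_trans ?_ (hmeas n hn)
      refine measure_mono_ae ?_
      filter_upwards [hXcoe n] with x hx
      intro hmem
      by_contra hnotin
      have hz : (Xn n : Ω → ℝ) x = 0 := by
        rw [hx]; exact Set.indicator_of_notMem hnotin fun _ => (1 : ℝ)
      have hmem' : δ ≤ edist ((Xn n : Ω → ℝ) x) (0 : ℝ) := hmem
      rw [hz] at hmem'
      rw [edist_self] at hmem'
      exact absurd hδ (not_lt.mpr hmem')
    have hlim : Tendsto (fun n : ℕ => ENNReal.ofReal (1 / n)) atTop (nhds 0) := by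
      have := ENNReal.tendsto_ofReal tendsto_one_div_atTop_nhds_zero_nat
      simpa using this
    exact tendsto_of_tendsto_of_tendsto_of_le_of_le' tendsto_const_nhds hlim
      (Eventually.of_forall fun n => bot_le) hub
  -- integral identity
  have h_eq : ∀ (n : ℕ) (g : Lp ℝ 1 μ),
      ∫ ω, (g : Ω → ℝ) ω * (Xn n : Ω → ℝ) ω ∂μ = ∫ ω in A n, (g : Ω → ℝ) ω ∂μ := by
    intro n g
    rw [← integral_indicator (hA n)]
    refine integral_congr_ae ?_
    filter_upwards [hXcoe n] with x hx
    rw [hx]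
    classical
    by_cases hxA : x ∈ A n
    · simp [Set.indicator_of_mem hxA]
    · simp [Set.indicator_of_notMem hxA]
  -- bound for sup
  have hbdd : ∀ n, BddAbove (Set.range fun g : H =>
      ∫ ω, (g.1 : Ω → ℝ) ω * (Xn n : Ω → ℝ) ω ∂μ) := by
    intro n
    refine ⟨1, ?_⟩
    rintro _ ⟨g, rfl⟩
    dsimp only
    rw [h_eq n g.1]
    calc ∫ ω in A n, (g.1 : Ω → ℝ) ω ∂μ
        ≤ ∫ ω, (g.1 : Ω → ℝ) ω ∂μ :=
          setIntegral_le_integral (hg_int g.1) (hg_nonneg g.1 g.2)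
      _ = 1 := (hdens g.1 g.2).2
  have hsup : ∀ n, ε ≤ ⨆ g : H, ∫ ω, (g.1 : Ω → ℝ) ω * (Xn n : Ω → ℝ) ω ∂μ := by
    intro n
    refine le_ciSup_of_le (hbdd n) ⟨f n, hfH n⟩ ?_
    rw [h_eq n (f n)]
    exact hfε n
  refine ⟨⟨ε, hε, Xn, h01, htm, hsup⟩, ?_⟩
  -- negation of Lebesgue property
  intro hLeb
  set Yn : ℕ → Lp ℝ ⊤ μ := fun n => -(Xn n) with hYn_def
  have hYcoe : ∀ n, ⇑(Yn n) =ᵐ[μ] fun x => -((Xn n : Ω → ℝ) x) := fun n => Lp.coeFn_neg (Xn n)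
  have hnormbd : ∃ C : ℝ, ∀ n, ‖Yn n‖ ≤ C := by
    refine ⟨measureUnivNNReal μ ^ ((⊤ : ENNReal).toReal)⁻¹ * 1, fun n => ?_⟩
    refine Lp.norm_le_of_ae_bound zero_le_one ?_
    filter_upwards [hYcoe n, hXcoe n] with x hy hx
    rw [hy, norm_neg, hx]
    classical
    simp only [Set.indicator]
    split_ifs <;> norm_num
  have htmY : TendstoInMeasure μ (fun n => ((Yn n : Ω → ℝ))) atTop ((0 : Lp ℝ ⊤ μ) : Ω → ℝ) := by
    have hneg : TendstoInMeasure μ (fun n => fun x => -((Xn n : Ω → ℝ) x)) atTop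
        (fun _ => (0 : ℝ)) := by
      intro δ hδ
      have h := htm δ hδ
      simpa [dist_eq_norm] using h
    exact hneg.congr (fun n => (hYcoe n).symm) (Lp.coeFn_zero ℝ ⊤ μ).symm
  have hconv := hLeb Yn 0 hnormbd htmY
  have hρ0 : ρ 0 = 0 := by
    rw [hρ]
    have hzero : ∀ g : H, ∫ ω, -((g.1 : Ω → ℝ) ω * ((0 : Lp ℝ ⊤ μ) : Ω → ℝ) ω) ∂μ = 0 := by
      intro g
      rw [show (0:ℝ) = ∫ (_ : Ω), (0:ℝ) ∂μ by simp]
      refine integral_congr_ae ?_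
      filter_upwards [Lp.coeFn_zero ℝ ⊤ μ] with x hx
      rw [hx]
      simp
    rw [iSup_congr hzero, ciSup_const]
  have hρY : ∀ n, ε ≤ ρ (Yn n) := by
    intro n
    rw [hρ]
    have heq : ∀ g : H, ∫ ω, -((g.1 : Ω → ℝ) ω * ((Yn n : Ω → ℝ)) ω) ∂μ
        = ∫ ω, (g.1 : Ω → ℝ) ω * (Xn n : Ω → ℝ) ω ∂μ := by
      intro g
      refine integral_congr_ae ?_
      filter_upwards [hYcoe n] with x hx
      rw [hx]
      ring
    rw [iSup_congr heq]
    exact hsup n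
  rw [hρ0] at hconv
  have : ε ≤ 0 := ge_of_tendsto hconv (Eventually.of_forall hρY)
  linarith
end

section
/- Let (fₙ) be a sequence in L¹(Ω) lying in a uniformly integrable set H, and suppose fₙ → f weakly in σ(L¹, L∞). Then for every uniformly bounded sequence (Xₙ) ⊆ L∞ with Xₙ → X in probability, E[fₙ Xₙ] → E[f X]. -/
open MeasureTheory Filter

private lemma ae_abs_le_norm' {Ω : Type*} [MeasurableSpace Ω] {μ : Measure Ω}
    (g : Lp ℝ ⊤ μ) : ∀ᵐ ω ∂μ, |(g : Ω → ℝ) ω| ≤ ‖g‖ := by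
  have h := ae_le_eLpNormEssSup (f := (g : Ω → ℝ)) (μ := μ)
  have hlt : eLpNormEssSup (g : Ω → ℝ) μ ≠ ⊤ := by
    rw [← eLpNorm_exponent_top]; exact (Lp.eLpNorm_lt_top g).ne
  filter_upwards [h] with ω hω
  have := ENNReal.toReal_mono hlt hω
  simpa [Lp.norm_def, eLpNorm_exponent_top, Real.norm_eq_abs] using this

/-- If `fₙ` lies in a uniformly integrable set `H ⊆ L¹` and `fₙ → f` weakly
(against all of `L∞`), then for any uniformly bounded sequence `Xₙ` in `L∞`
converging in probability to `X`, one has `E[fₙ Xₙ] → E[f X]`. -/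
theorem integral_mul_tendsto_of_unifInt {Ω : Type*} [MeasurableSpace Ω]
    {μ : Measure Ω} [IsProbabilityMeasure μ]
    (H : Set (Lp ℝ 1 μ))
    (hUI : (∀ ε > (0 : ℝ), ∃ K > (0 : ℝ), ∀ g ∈ H,
        ∫ ω in {ω | K < |(g : Ω → ℝ) ω|}, |(g : Ω → ℝ) ω| ∂μ < ε) ∧
      ∃ B : ℝ, ∀ g ∈ H, ∫ ω, |(g : Ω → ℝ) ω| ∂μ ≤ B)
    (fn : ℕ → Lp ℝ 1 μ) (hfn : ∀ n, fn n ∈ H) (f : Lp ℝ 1 μ)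
    (hweak : ∀ g : Lp ℝ ⊤ μ,
      Tendsto (fun n => ∫ ω, (fn n : Ω → ℝ) ω * (g : Ω → ℝ) ω ∂μ) atTop
        (nhds (∫ ω, (f : Ω → ℝ) ω * (g : Ω → ℝ) ω ∂μ)))
    (Xn : ℕ → Lp ℝ ⊤ μ) (X : Lp ℝ ⊤ μ) (M : ℝ) (hM : ∀ n, ‖Xn n‖ ≤ M)
    (hX : TendstoInMeasure μ (fun n => ((Xn n : Ω → ℝ))) atTop (X : Ω → ℝ)) :
    Tendsto (fun n => ∫ ω, (fn n : Ω → ℝ) ω * (Xn n : Ω → ℝ) ω ∂μ) atTop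
      (nhds (∫ ω, (f : Ω → ℝ) ω * (X : Ω → ℝ) ω ∂μ)) := by
  obtain ⟨hUI1, B, hB⟩ := hUI
  have hB0 : 0 ≤ B :=
    le_trans (integral_nonneg fun ω => abs_nonneg _) (hB _ (hfn 0))
  have hM0 : 0 ≤ M := le_trans (norm_nonneg _) (hM 0)
  obtain ⟨C, hC0, hCge⟩ : ∃ C : ℝ, 0 < C ∧ M + ‖X‖ ≤ C :=
    ⟨M + ‖X‖ + 1, by positivity, by linarith⟩
  -- basic measurability / integrability
  have hfint : ∀ n, Integrable ((fn n : Ω → ℝ)) μ := fun n => L1.integrable_coeFn _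
  have hXm : ∀ n, AEStronglyMeasurable ((Xn n : Ω → ℝ)) μ :=
    fun n => Lp.aestronglyMeasurable _
  have hXm' : AEStronglyMeasurable ((X : Ω → ℝ)) μ := Lp.aestronglyMeasurable _
  have hXbd : ∀ n, ∀ᵐ ω ∂μ, |(Xn n : Ω → ℝ) ω| ≤ M :=
    fun n => (ae_abs_le_norm' (Xn n)).mono fun ω h => h.trans (hM n)
  have hXbd' : ∀ᵐ ω ∂μ, |(X : Ω → ℝ) ω| ≤ ‖X‖ := ae_abs_le_norm' X
  have hint1 : ∀ n, Integrable (fun ω => (fn n : Ω → ℝ) ω * (Xn n : Ω → ℝ) ω) μ := by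
    intro n
    have := (hfint n).bdd_mul (hXm n) ((hXbd n).mono fun ω h => by
      simpa [Real.norm_eq_abs] using h)
    simpa [mul_comm] using this
  have hint2 : Integrable (fun ω => (fn 0 : Ω → ℝ) ω * (X : Ω → ℝ) ω) μ := by
    have := (hfint 0).bdd_mul hXm' (hXbd'.mono fun ω h => by
      simpa [Real.norm_eq_abs] using h)
    simpa [mul_comm] using this
  have hint2' : ∀ n, Integrable (fun ω => (fn n : Ω → ℝ) ω * (X : Ω → ℝ) ω) μ := by
    intro n
    have := (hfint n).bdd_mul hXm' (hXbd'.mono fun ω h => by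
      simpa [Real.norm_eq_abs] using h)
    simpa [mul_comm] using this
  have hint3 : ∀ n, Integrable
      (fun ω => |(fn n : Ω → ℝ) ω| * |(Xn n : Ω → ℝ) ω - (X : Ω → ℝ) ω|) μ := by
    intro n
    have hb : ∀ᵐ ω ∂μ, ‖|(Xn n : Ω → ℝ) ω - (X : Ω → ℝ) ω|‖ ≤ M + ‖X‖ := by
      filter_upwards [hXbd n, hXbd'] with ω h1 h2
      rw [Real.norm_eq_abs, abs_abs]
      calc |(Xn n : Ω → ℝ) ω - (X : Ω → ℝ) ω|
          ≤ |(Xn n : Ω → ℝ) ω| + |(X : Ω → ℝ) ω| := abs_sub _ _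
        _ ≤ M + ‖X‖ := add_le_add h1 h2
    have habs : AEStronglyMeasurable (fun ω => |(Xn n : Ω → ℝ) ω - (X : Ω → ℝ) ω|) μ := by
      simpa [Real.norm_eq_abs] using ((hXm n).sub hXm').norm
    have := (hfint n).abs.bdd_mul habs hb
    simpa [mul_comm] using this
  -- reduce to showing the difference tends to 0
  have key : Tendsto (fun n =>
      (∫ ω, (fn n : Ω → ℝ) ω * (Xn n : Ω → ℝ) ω ∂μ) -
      (∫ ω, (fn n : Ω → ℝ) ω * (X : Ω → ℝ) ω ∂μ)) atTop (nhds 0) := by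
    apply squeeze_zero_norm (a := fun n =>
      ∫ ω, |(fn n : Ω → ℝ) ω| * |(Xn n : Ω → ℝ) ω - (X : Ω → ℝ) ω| ∂μ)
    · intro n
      rw [← integral_sub (hint1 n) (hint2' n)]
      calc ‖∫ ω, ((fn n : Ω → ℝ) ω * (Xn n : Ω → ℝ) ω -
              (fn n : Ω → ℝ) ω * (X : Ω → ℝ) ω) ∂μ‖
          ≤ ∫ ω, ‖(fn n : Ω → ℝ) ω * (Xn n : Ω → ℝ) ω -
              (fn n : Ω → ℝ) ω * (X : Ω → ℝ) ω‖ ∂μ := norm_integral_le_integral_norm _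
        _ = ∫ ω, |(fn n : Ω → ℝ) ω| * |(Xn n : Ω → ℝ) ω - (X : Ω → ℝ) ω| ∂μ := by
            simp only [Real.norm_eq_abs, ← mul_sub, abs_mul]
    · -- main estimate
      rw [Metric.tendsto_atTop]
      intro ε hε
      obtain ⟨K, hK0, hKui⟩ := hUI1 (ε / (3 * C)) (by positivity)
      set δ : ℝ := ε / (3 * (B + 1)) with hδdef
      have hδ0 : 0 < δ := by positivity
      set η : ℝ := ε / (3 * C * K) with hηdef
      have hη0 : 0 < η := by positivity
      have hEv : ∀ᶠ n in atTop,
          μ {ω | δ ≤ dist ((Xn n : Ω → ℝ) ω) ((X : Ω → ℝ) ω)} < ENNReal.ofReal η :=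
        (tendstoInMeasure_iff_dist.1 hX δ hδ0).eventually_lt_const (by simp [ENNReal.ofReal_pos, hη0])
      obtain ⟨N, hN⟩ := eventually_atTop.1 hEv
      refine ⟨N, fun n hn => ?_⟩
      set A : Set Ω := {ω | δ ≤ dist ((Xn n : Ω → ℝ) ω) ((X : Ω → ℝ) ω)} with hAdef
      have hAm : MeasurableSet A :=
        measurableSet_le measurable_const
          (((Lp.stronglyMeasurable (Xn n)).measurable).dist
            (Lp.stronglyMeasurable X).measurable)
      set U : Set Ω := {ω | K < |(fn n : Ω → ℝ) ω|} with hUdef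
      have hUm : MeasurableSet U :=
        measurableSet_lt measurable_const (Lp.stronglyMeasurable (fn n)).measurable.abs
      have hμA : (μ A).toReal < η := by
        have := hN n hn
        exact (ENNReal.lt_ofReal_iff_toReal_lt (measure_ne_top μ A)).1 this
      -- split the integral
      have hsplit :
          (∫ ω, |(fn n : Ω → ℝ) ω| * |(Xn n : Ω → ℝ) ω - (X : Ω → ℝ) ω| ∂μ) =
          (∫ ω in A, |(fn n : Ω → ℝ) ω| * |(Xn n : Ω → ℝ) ω - (X : Ω → ℝ) ω| ∂μ) +
          (∫ ω in Aᶜ, |(fn n : Ω → ℝ) ω| * |(Xn n : Ω → ℝ) ω - (X : Ω → ℝ) ω| ∂μ) :=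
        (integral_add_compl hAm (hint3 n)).symm
      -- bound on the complement: |Xn - X| < δ there
      have hcompl :
          (∫ ω in Aᶜ, |(fn n : Ω → ℝ) ω| * |(Xn n : Ω → ℝ) ω - (X : Ω → ℝ) ω| ∂μ)
            ≤ δ * B := by
        have h1 : (∫ ω in Aᶜ, |(fn n : Ω → ℝ) ω| * |(Xn n : Ω → ℝ) ω - (X : Ω → ℝ) ω| ∂μ)
            ≤ ∫ ω in Aᶜ, δ * |(fn n : Ω → ℝ) ω| ∂μ := by
          apply setIntegral_mono_on ((hint3 n).integrableOn)
            (((hfint n).abs.const_mul δ).integrableOn) hAm.compl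
          intro ω hω
          have : dist ((Xn n : Ω → ℝ) ω) ((X : Ω → ℝ) ω) < δ := not_le.1 hω
          rw [Real.dist_eq] at this
          calc |(fn n : Ω → ℝ) ω| * |(Xn n : Ω → ℝ) ω - (X : Ω → ℝ) ω|
              ≤ |(fn n : Ω → ℝ) ω| * δ :=
                mul_le_mul_of_nonneg_left this.le (abs_nonneg _)
            _ = δ * |(fn n : Ω → ℝ) ω| := mul_comm _ _
        have h2 : (∫ ω in Aᶜ, δ * |(fn n : Ω → ℝ) ω| ∂μ)
            = δ * ∫ ω in Aᶜ, |(fn n : Ω → ℝ) ω| ∂μ := integral_const_mul δ _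
        have h3 : (∫ ω in Aᶜ, |(fn n : Ω → ℝ) ω| ∂μ) ≤ ∫ ω, |(fn n : Ω → ℝ) ω| ∂μ :=
          setIntegral_le_integral (hfint n).abs (Eventually.of_forall fun ω => abs_nonneg _)
        calc (∫ ω in Aᶜ, |(fn n : Ω → ℝ) ω| * |(Xn n : Ω → ℝ) ω - (X : Ω → ℝ) ω| ∂μ)
            ≤ δ * ∫ ω in Aᶜ, |(fn n : Ω → ℝ) ω| ∂μ := h1.trans h2.le
          _ ≤ δ * B := by
              have := h3.trans (hB _ (hfn n))
              exact mul_le_mul_of_nonneg_left this hδ0.le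
      -- bound on A
      have hA1 : (∫ ω in A, |(fn n : Ω → ℝ) ω| * |(Xn n : Ω → ℝ) ω - (X : Ω → ℝ) ω| ∂μ)
          ≤ C * ∫ ω in A, |(fn n : Ω → ℝ) ω| ∂μ := by
        have h1 : (∫ ω in A, |(fn n : Ω → ℝ) ω| * |(Xn n : Ω → ℝ) ω - (X : Ω → ℝ) ω| ∂μ)
            ≤ ∫ ω in A, C * |(fn n : Ω → ℝ) ω| ∂μ := by
          apply setIntegral_mono_ae ((hint3 n).integrableOn)
            (((hfint n).abs.const_mul C).integrableOn)
          filter_upwards [hXbd n, hXbd'] with ω h1 h2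
          calc |(fn n : Ω → ℝ) ω| * |(Xn n : Ω → ℝ) ω - (X : Ω → ℝ) ω|
              ≤ |(fn n : Ω → ℝ) ω| * C := by
                apply mul_le_mul_of_nonneg_left _ (abs_nonneg _)
                calc |(Xn n : Ω → ℝ) ω - (X : Ω → ℝ) ω|
                    ≤ |(Xn n : Ω → ℝ) ω| + |(X : Ω → ℝ) ω| := abs_sub _ _
                  _ ≤ M + ‖X‖ := add_le_add h1 h2
                  _ ≤ C := hCge
            _ = C * |(fn n : Ω → ℝ) ω| := mul_comm _ _
        calc (∫ ω in A, |(fn n : Ω → ℝ) ω| * |(Xn n : Ω → ℝ) ω - (X : Ω → ℝ) ω| ∂μ)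
            ≤ ∫ ω in A, C * |(fn n : Ω → ℝ) ω| ∂μ := h1
          _ = C * ∫ ω in A, |(fn n : Ω → ℝ) ω| ∂μ := integral_const_mul C _
      have hA2 : (∫ ω in A, |(fn n : Ω → ℝ) ω| ∂μ) < ε / (3 * C) + K * η := by
        have hsplit2 : (∫ ω in A ∩ U, |(fn n : Ω → ℝ) ω| ∂μ) +
            (∫ ω in A \ U, |(fn n : Ω → ℝ) ω| ∂μ) = ∫ ω in A, |(fn n : Ω → ℝ) ω| ∂μ :=
          integral_inter_add_diff hUm (hfint n).abs.integrableOn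
        have hAU : (∫ ω in A ∩ U, |(fn n : Ω → ℝ) ω| ∂μ) < ε / (3 * C) := by
          have hmono : (∫ ω in A ∩ U, |(fn n : Ω → ℝ) ω| ∂μ)
              ≤ ∫ ω in U, |(fn n : Ω → ℝ) ω| ∂μ :=
            setIntegral_mono_set (hfint n).abs.integrableOn
              (Eventually.of_forall fun ω => abs_nonneg _)
              (HasSubset.Subset.eventuallyLE Set.inter_subset_right)
          exact hmono.trans_lt (hKui _ (hfn n))
        have hAd : (∫ ω in A \ U, |(fn n : Ω → ℝ) ω| ∂μ) ≤ K * η := by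
          have hb : ∀ ω ∈ A \ U, ‖|(fn n : Ω → ℝ) ω|‖ ≤ K := by
            intro ω hω
            rw [Real.norm_eq_abs, abs_abs]
            exact not_lt.1 hω.2
          have := norm_setIntegral_le_of_norm_le_const
            (lt_of_le_of_lt (measure_mono Set.diff_subset) (measure_lt_top μ A)) hb
          calc (∫ ω in A \ U, |(fn n : Ω → ℝ) ω| ∂μ)
              ≤ ‖∫ ω in A \ U, |(fn n : Ω → ℝ) ω| ∂μ‖ := by
                rw [Real.norm_eq_abs]; exact le_abs_self _
            _ ≤ K * (μ (A \ U)).toReal := this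
            _ ≤ K * (μ A).toReal := by
                apply mul_le_mul_of_nonneg_left _ hK0.le
                exact ENNReal.toReal_mono (measure_ne_top μ A)
                  (measure_mono Set.diff_subset)
            _ ≤ K * η := mul_le_mul_of_nonneg_left hμA.le hK0.le
        linarith
      -- put it together
      have hgn : (∫ ω, |(fn n : Ω → ℝ) ω| * |(Xn n : Ω → ℝ) ω - (X : Ω → ℝ) ω| ∂μ) < ε := by
        rw [hsplit]
        have hCA : C * (∫ ω in A, |(fn n : Ω → ℝ) ω| ∂μ) < C * (ε / (3 * C) + K * η) :=
          (mul_lt_mul_iff_right₀ hC0).2 hA2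
        have e1 : C * (ε / (3 * C) + K * η) = ε / 3 + ε / 3 := by
          show C * (ε / (3 * C) + K * (ε / (3 * C * K))) = ε / 3 + ε / 3
          field_simp
        have e2 : δ * B < ε / 3 := by
          show ε / (3 * (B + 1)) * B < ε / 3
          rw [div_mul_eq_mul_div, div_lt_div_iff₀ (by positivity) (by norm_num)]
          nlinarith
        have := hA1.trans_lt hCA
        linarith
      have hnonneg : 0 ≤ ∫ ω, |(fn n : Ω → ℝ) ω| * |(Xn n : Ω → ℝ) ω - (X : Ω → ℝ) ω| ∂μ :=
        integral_nonneg fun ω => mul_nonneg (abs_nonneg _) (abs_nonneg _)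
      rw [Real.dist_eq, sub_zero, abs_of_nonneg hnonneg]
      exact hgn
  have hfin := key.add (hweak X)
  simp only [zero_add] at hfin
  convert hfin using 2 with n
  ring
end
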